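/- For a space X, the following are equivalent: (1) X satisfies Sfin(C_Γ, C_Τ); (2) for every continuous function Ψ : X → 2^(ℕ×ℕ), if the image Ψ[X] is a γ-family, then Ψ[X] is finitely τ-diagonalizable. -/

import Mathlib

open Set Filter Cardinal
open scoped Classical

noncomputable section

/-- The Cantor space `2^ℕ`. -/
abbrev Cantor := ℕ → Bool

/-- Arrays: elements of `2^(ℕ×ℕ)`. -/
abbrev Arr := ℕ × ℕ → Bool

/-- A γ-array: every row is eventually 1. -/
def IsGammaArray (A : Arr) : Prop := ∀ n, ∀ᶠ m in atTop, A (n, m) = true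

/-- A γ-family: a set of γ-arrays. -/
def GammaFamily (𝒜 : Set Arr) : Prop := ∀ A ∈ 𝒜, IsGammaArray A

/-- A family of arrays is finitely τ-diagonalizable. -/
def FinTauDiag (𝒜 : Set Arr) : Prop :=
  ∃ F : ℕ → Finset ℕ,
    (∀ A ∈ 𝒜, ∃ᶠ n in atTop, ∃ m ∈ F n, A (n, m) = true) ∧
    (∀ A ∈ 𝒜, ∀ B ∈ 𝒜,
      (∀ᶠ n in atTop, ∀ m ∈ F n, A (n, m) ≤ B (n, m)) ∨
      (∀ᶠ n in atTop, ∀ m ∈ F n, B (n, m) ≤ A (n, m)))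

/-- A family of arrays is semi τ-diagonalizable (via a partial function with domain `D`). -/
def SemiTauDiag (𝒜 : Set Arr) : Prop :=
  ∃ (D : Set ℕ) (g : ℕ → ℕ),
    (∀ A ∈ 𝒜, ∃ᶠ n in atTop, n ∈ D ∧ A (n, g n) = true) ∧
    (∀ A ∈ 𝒜, ∀ B ∈ 𝒜,
      (∀ᶠ n in atTop, n ∈ D → A (n, g n) ≤ B (n, g n)) ∨
      (∀ᶠ n in atTop, n ∈ D → B (n, g n) ≤ A (n, g n)))

/-- A τ-family of arrays. -/
def TauFamily (𝒜 : Set Arr) : Prop :=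
  (∀ A ∈ 𝒜, ∀ n, ∃ᶠ m in atTop, A (n, m) = true) ∧
  (∀ A ∈ 𝒜, ∀ B ∈ 𝒜, ∀ n,
    (∀ᶠ m in atTop, A (n, m) ≤ B (n, m)) ∨
    (∀ᶠ m in atTop, B (n, m) ≤ A (n, m)))

/-- A family of arrays is τ-diagonalizable. -/
def TauDiag (𝒜 : Set Arr) : Prop :=
  ∃ g : ℕ → ℕ,
    (∀ A ∈ 𝒜, ∃ᶠ n in atTop, A (n, g n) = true) ∧
    (∀ A ∈ 𝒜, ∀ B ∈ 𝒜,
      (∀ᶠ n in atTop, A (n, g n) ≤ B (n, g n)) ∨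
      (∀ᶠ n in atTop, B (n, g n) ≤ A (n, g n)))

/-- A family of arrays is o-diagonalizable. -/
def ODiag (𝒜 : Set Arr) : Prop :=
  ∃ g : ℕ → ℕ, ∀ A ∈ 𝒜, ∃ n, A (n, g n) = true

/-- An ω-family of arrays: rows frequently 1 and, for each `n`,
the family of the `n`-th rows is centered. -/
def OmegaFamily (𝒜 : Set Arr) : Prop :=
  (∀ A ∈ 𝒜, ∀ n, ∃ᶠ m in atTop, A (n, m) = true) ∧
  (∀ n, ∀ 𝒜' ⊆ 𝒜, 𝒜'.Finite → {m | ∀ A ∈ 𝒜', A (n, m) = true}.Infinite)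

/-- The bounding number 𝔟. -/
def bNum : Cardinal :=
  sInf {c | ∃ F : Set (ℕ → ℕ), Cardinal.mk F = c ∧
    ¬ ∃ g : ℕ → ℕ, ∀ f ∈ F, ∀ᶠ n in atTop, f n ≤ g n}

/-- The splitting number 𝔰. -/
def sNum : Cardinal :=
  sInf {c | ∃ S : Set (Set ℕ), Cardinal.mk S = c ∧ (∀ s ∈ S, s.Infinite) ∧
    ∀ a : Set ℕ, a.Infinite → ∃ s ∈ S, (a ∩ s).Infinite ∧ (a \ s).Infinite}

/-- The tower number 𝔱. -/
def tNum : Cardinal :=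
  sInf {c | ∃ T : Set (Set ℕ), Cardinal.mk T = c ∧ (∀ t ∈ T, t.Infinite) ∧
    (∀ a ∈ T, ∀ b ∈ T, (a \ b).Finite ∨ (b \ a).Finite) ∧
    ¬ ∃ a : Set ℕ, a.Infinite ∧ ∀ t ∈ T, (a \ t).Finite}

/-- cov(M): the least number of meager sets covering the Baire space. -/
def covM : Cardinal :=
  sInf {c | ∃ 𝒞 : Set (Set (ℕ → ℕ)), Cardinal.mk 𝒞 = c ∧
    (∀ M ∈ 𝒞, IsMeagre M) ∧ ⋃₀ 𝒞 = Set.univ}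

/-- The o-diagonalization number: the minimal cardinality of a τ-family
which is not o-diagonalizable. -/
def odNum : Cardinal :=
  sInf {c | ∃ 𝒜 : Set Arr, Cardinal.mk 𝒜 = c ∧ TauFamily 𝒜 ∧ ¬ ODiag 𝒜}

section Covers

variable (α : Type*)

/-- A countable cover of the space `α`. -/
def CountCover (𝒰 : Set (Set α)) : Prop :=
  𝒰.Countable ∧ ⋃₀ 𝒰 = Set.univ ∧ Set.univ ∉ 𝒰

/-- A (countable) γ-cover. -/
def GammaCover (𝒰 : Set (Set α)) : Prop :=
  CountCover α 𝒰 ∧ 𝒰.Infinite ∧ ∀ x : α, {U | U ∈ 𝒰 ∧ x ∉ U}.Finite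

/-- A (countable) τ-cover. -/
def TauCover (𝒰 : Set (Set α)) : Prop :=
  CountCover α 𝒰 ∧ (∀ x : α, {U | U ∈ 𝒰 ∧ x ∈ U}.Infinite) ∧
  ∀ x y : α, {U | U ∈ 𝒰 ∧ x ∈ U ∧ y ∉ U}.Finite ∨ {U | U ∈ 𝒰 ∧ y ∈ U ∧ x ∉ U}.Finite

/-- A (countable) ω-cover. -/
def OmegaCover (𝒰 : Set (Set α)) : Prop :=
  CountCover α 𝒰 ∧ ∀ F : Set α, F.Finite → ∃ U ∈ 𝒰, F ⊆ U

variable [TopologicalSpace α]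

/-- All members are open. -/
def OpenFam (𝒰 : Set (Set α)) : Prop := ∀ U ∈ 𝒰, IsOpen U

/-- All members are clopen. -/
def ClopenFam (𝒰 : Set (Set α)) : Prop := ∀ U ∈ 𝒰, IsClopen U

/-- The class O of countable open covers. -/
def OCov (𝒰 : Set (Set α)) : Prop := CountCover α 𝒰 ∧ OpenFam α 𝒰
/-- The class Γ of countable open γ-covers. -/
def OGamma (𝒰 : Set (Set α)) : Prop := GammaCover α 𝒰 ∧ OpenFam α 𝒰
/-- The class Τ of countable open τ-covers. -/
def OTau (𝒰 : Set (Set α)) : Prop := TauCover α 𝒰 ∧ OpenFam α 𝒰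
/-- The class Ω of countable open ω-covers. -/
def OOmega (𝒰 : Set (Set α)) : Prop := OmegaCover α 𝒰 ∧ OpenFam α 𝒰

/-- The class C of countable clopen covers. -/
def KCov (𝒰 : Set (Set α)) : Prop := CountCover α 𝒰 ∧ ClopenFam α 𝒰
/-- The class C_Γ of countable clopen γ-covers. -/
def KGamma (𝒰 : Set (Set α)) : Prop := GammaCover α 𝒰 ∧ ClopenFam α 𝒰
/-- The class C_Τ of countable clopen τ-covers. -/
def KTau (𝒰 : Set (Set α)) : Prop := TauCover α 𝒰 ∧ ClopenFam α 𝒰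

end Covers

/-- The selection principle S1(𝒜,ℬ). -/
def S1 (α : Type*) (𝒜 ℬ : Set (Set α) → Prop) : Prop :=
  ∀ U : ℕ → Set (Set α), (∀ n, 𝒜 (U n)) →
    ∃ V : ℕ → Set α, (∀ n, V n ∈ U n) ∧ ℬ (range V)

/-- The selection principle Sfin(𝒜,ℬ). -/
def SFin (α : Type*) (𝒜 ℬ : Set (Set α) → Prop) : Prop :=
  ∀ U : ℕ → Set (Set α), (∀ n, 𝒜 (U n)) →
    ∃ F : ℕ → Set (Set α), (∀ n, (F n).Finite ∧ F n ⊆ U n) ∧ ℬ (⋃ n, F n)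

/-- The selection principle Ufin(𝒜,ℬ). -/
def UFin (α : Type*) (𝒜 ℬ : Set (Set α) → Prop) : Prop :=
  ∀ U : ℕ → Set (Set α), (∀ n, 𝒜 (U n)) →
    (∀ n, ¬ ∃ F : Set (Set α), F ⊆ U n ∧ F.Finite ∧ ⋃₀ F = Set.univ) →
    ∃ F : ℕ → Set (Set α), (∀ n, (F n).Finite ∧ F n ⊆ U n) ∧
      ℬ (range fun n => ⋃₀ F n)

/-- The critical cardinality non(P) of a property `P` of sets of reals:
the minimal cardinality of an infinite subset of the Cantor space not satisfying `P`. -/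
def nonP (P : Set Cantor → Prop) : Cardinal :=
  sInf {c | ∃ X : Set Cantor, X.Infinite ∧ ¬ P X ∧ Cardinal.mk X = c}

/-- The collection of cardinalities of witnessing families of `f`-sequences for `θ_f`. -/
def ThetaSet (f : ℕ → ℕ) : Set Cardinal :=
  {c | ∃ ℱ : Set (ℕ → Set ℕ), Cardinal.mk ℱ = c ∧
    (∀ σ ∈ ℱ, ∀ n, σ n ⊆ Iio (f n)) ∧
    (∀ σ ∈ ℱ, ∀ᶠ n in atTop, (σ n).Nonempty) ∧
    (∀ σ ∈ ℱ, ∀ η ∈ ℱ, (∀ᶠ n in atTop, σ n ⊆ η n) ∨ (∀ᶠ n in atTop, η n ⊆ σ n)) ∧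
    ¬ ∃ g : ℕ → ℕ, ∀ σ ∈ ℱ, ∃ n, g n ∈ σ n}

/-- The cardinal θ_f; equal to 𝔠⁺ if no witnessing family exists. -/
def theta (f : ℕ → ℕ) : Cardinal :=
  if (ThetaSet f).Nonempty then sInf (ThetaSet f) else Order.succ Cardinal.continuum

/-- θ* = min over f (with all values ≥ 2) of θ_f. -/
def thetaStar : Cardinal :=
  sInf {c | ∃ f : ℕ → ℕ, (∀ n, 2 ≤ f n) ∧ theta f = c}

/-- The collection of cardinalities of witnessing families for `𝔈_f`. -/
def ESet (f : ℕ → ℕ) : Set Cardinal :=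
  {c | ∃ F : Set (ℕ → ℕ), Cardinal.mk F = c ∧ (∀ h ∈ F, ∀ n, h n < f n) ∧
    ∀ g : ℕ → ℕ, ∃ h ∈ F, ∀ n, h n ≠ g n}

/-- The cardinal 𝔈_f; equal to 𝔠⁺ if no witnessing family exists. -/
def ENum (f : ℕ → ℕ) : Cardinal :=
  if (ESet f).Nonempty then sInf (ESet f) else Order.succ Cardinal.continuum

/-- 𝔈* = min over f (with all values ≥ 1) of 𝔈_f. -/
def EStar : Cardinal :=
  sInf {c | ∃ f : ℕ → ℕ, (∀ n, 1 ≤ f n) ∧ ENum f = c}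



/-! ### Auxiliary lemmas for `stmt2` -/

lemma exists_enum' {β : Type*} {s : Set β} (hc : s.Countable) (hi : s.Infinite) :
    ∃ e : ℕ → β, Function.Injective e ∧ Set.range e = s := by
  haveI := hc.to_subtype
  haveI := hi.to_subtype
  obtain ⟨f⟩ : Nonempty (ℕ ≃ s) := nonempty_equiv_of_countable
  refine ⟨fun n => (f n : β), fun a b hab => f.injective (Subtype.ext hab), ?_⟩
  ext x
  constructor
  · rintro ⟨n, rfl⟩; exact (f n).2
  · intro hx; exact ⟨f.symm ⟨x, hx⟩, by simp⟩

lemma ev_not_mem' {s : Set ℕ} (h : s.Finite) : ∀ᶠ n in atTop, n ∉ s := by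
  rw [← Nat.cofinite_eq_atTop]; exact Set.Finite.eventually_cofinite_notMem h

/-- Any infinite subfamily of a clopen γ-cover is a clopen τ-cover. -/
lemma kTau_of_subset' {α : Type*} [TopologicalSpace α] {𝒰 𝒱 : Set (Set α)}
    (h : KGamma α 𝒰) (hsub : 𝒱 ⊆ 𝒰) (hinf : 𝒱.Infinite) : KTau α 𝒱 := by
  obtain ⟨⟨⟨hcnt, hcov, hnuniv⟩, hUinf, hγ⟩, hclop⟩ := h
  refine ⟨⟨⟨hcnt.mono hsub, ?_, fun hm => hnuniv (hsub hm)⟩, ?_, ?_⟩,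
    fun U hU => hclop U (hsub hU)⟩
  · ext x
    simp only [Set.mem_sUnion, Set.mem_univ, iff_true]
    obtain ⟨V, hV⟩ := (hinf.diff (hγ x)).nonempty
    exact ⟨V, hV.1, by_contra fun hx => hV.2 ⟨hsub hV.1, hx⟩⟩
  · intro x
    have hss : 𝒱 \ {U | U ∈ 𝒰 ∧ x ∉ U} ⊆ {U | U ∈ 𝒱 ∧ x ∈ U} := fun V hV =>
      ⟨hV.1, by_contra fun hx => hV.2 ⟨hsub hV.1, hx⟩⟩
    exact (hinf.diff (hγ x)).mono hss
  · intro x y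
    left
    exact (hγ y).subset fun U hU => ⟨hsub hU.1, hU.2.2⟩

/-- A space satisfies Sfin(C_Γ,C_Τ) iff every continuous image in `2^(ℕ×ℕ)`
which is a γ-family is finitely τ-diagonalizable. -/
theorem stmt2 (X : Set Cantor) (hX : X.Infinite) :
    SFin ↥X (KGamma ↥X) (KTau ↥X) ↔
      ∀ Ψ : ↥X → Arr, Continuous Ψ → GammaFamily (range Ψ) → FinTauDiag (range Ψ) := by
  constructor
  · -- Sfin(C_Γ, C_Τ) implies the image property
    intro hS Ψ hΨc hΨγ
    set U : ℕ → ℕ → Set ↥X := fun n m => {x | Ψ x (n, m) = true} with hUdef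
    have hUclop : ∀ n m, IsClopen (U n m) := by
      intro n m
      have hcont : Continuous fun x : ↥X => Ψ x (n, m) :=
        (continuous_apply ((n, m) : ℕ × ℕ)).comp hΨc
      exact (isClopen_discrete ({true} : Set Bool)).preimage hcont
    have hUγ : ∀ (x : ↥X) n, ∀ᶠ m in atTop, x ∈ U n m := fun x n => hΨγ (Ψ x) ⟨x, rfl⟩ n
    have hmissfin : ∀ (x : ↥X) n, {m | x ∉ U n m}.Finite := by
      intro x n
      obtain ⟨M, hM⟩ := eventually_atTop.1 (hUγ x n)
      exact (Set.finite_Iio M).subset fun m hm => lt_of_not_ge fun hle => hm (hM m hle)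
    by_cases hcase : {n | ∃ m, U n m = Set.univ}.Infinite
    · -- trivial case: infinitely many rows with a full entry
      let Fsel : ℕ → Finset ℕ := fun n =>
        if h : ∃ m, U n m = Set.univ then {h.choose} else ∅
      refine ⟨Fsel, ?_, ?_⟩
      · rintro A ⟨x, rfl⟩
        rw [Nat.frequently_atTop_iff_infinite]
        apply hcase.mono
        intro n hn
        have hn' : ∃ m, U n m = Set.univ := hn
        simp only [Set.mem_setOf_eq, Fsel, dif_pos hn']
        refine ⟨hn'.choose, Finset.mem_singleton_self _, ?_⟩
        show x ∈ U n hn'.choose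
        rw [hn'.choose_spec]
        trivial
      · rintro A ⟨x, rfl⟩ B ⟨y, rfl⟩
        left
        apply Filter.Eventually.of_forall
        intro n m hm
        by_cases h : ∃ m, U n m = Set.univ
        · simp only [Fsel, dif_pos h, Finset.mem_singleton] at hm
          subst hm
          have hy : y ∈ U n h.choose := by rw [h.choose_spec]; trivial
          have hy' : Ψ y (n, h.choose) = true := hy
          rw [hy']
          exact Bool.le_true _
        · simp only [Fsel, dif_neg h] at hm
          exact absurd hm (Finset.notMem_empty m)
    · -- main case
      have hfin : {n | ∃ m, U n m = Set.univ}.Finite := Set.not_infinite.mp hcase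
      obtain ⟨N, hN⟩ : ∃ N, ∀ n, N ≤ n → ∀ m, U n m ≠ Set.univ := by
        obtain ⟨N, hNb⟩ := hfin.bddAbove
        exact ⟨N + 1, fun n hn m hm =>
          absurd (hNb (⟨m, hm⟩ : n ∈ {n | ∃ m, U n m = Set.univ})) (by omega)⟩
      set C : ℕ → Set (Set ↥X) := fun k => Set.range (U (N + k)) with hCdef
      have hKG : ∀ k, KGamma ↥X (C k) := by
        intro k
        have hnu : Set.univ ∉ C k := by
          rintro ⟨m, hm⟩
          exact hN (N + k) (Nat.le_add_right N k) m hm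
        refine ⟨⟨⟨Set.countable_range _, ?_, hnu⟩, ?_, ?_⟩, ?_⟩
        · ext x
          simp only [Set.mem_sUnion, Set.mem_univ, iff_true]
          obtain ⟨M, hM⟩ := eventually_atTop.1 (hUγ x (N + k))
          exact ⟨U (N + k) M, Set.mem_range_self M, hM M le_rfl⟩
        · intro hfin'
          haveI := hfin'.to_subtype
          obtain ⟨V, hV0⟩ := Finite.exists_infinite_fiber
            (fun m : ℕ => (⟨U (N + k) m, Set.mem_range_self m⟩ : C k))
          have hV : ((fun m : ℕ => (⟨U (N + k) m, Set.mem_range_self m⟩ : C k)) ⁻¹'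
              {V}).Infinite := Set.infinite_coe_iff.1 hV0
          have hVuniv : (V : Set ↥X) = Set.univ := by
            ext x
            simp only [Set.mem_univ, iff_true]
            obtain ⟨M, hM⟩ := eventually_atTop.1 (hUγ x (N + k))
            obtain ⟨m, hm, hMm⟩ := hV.exists_gt M
            have hUV : U (N + k) m = (V : Set ↥X) := by
              have : (⟨U (N + k) m, Set.mem_range_self m⟩ : C k) = V := hm
              exact congrArg Subtype.val this
            rw [← hUV]
            exact hM m (le_of_lt hMm)
          obtain ⟨m₀, hm₀⟩ := V.2
          exact hN (N + k) (Nat.le_add_right N k) m₀ (hm₀.trans hVuniv)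
        · intro x
          apply ((hmissfin x (N + k)).image (U (N + k))).subset
          rintro W ⟨⟨m, rfl⟩, hxW⟩
          exact ⟨m, hxW, rfl⟩
        · rintro W ⟨m, rfl⟩
          exact hUclop (N + k) m
      obtain ⟨F, hF, hτ⟩ := hS C hKG
      let r : ℕ → Set ↥X → ℕ := fun k W =>
        if h : ∃ m, U (N + k) m = W then h.choose else 0
      have hr : ∀ k W, W ∈ F k → U (N + k) (r k W) = W := by
        intro k W hW
        have h : ∃ m, U (N + k) m = W := (hF k).2 hW
        simp only [r, dif_pos h]
        exact h.choose_spec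
      let Gf : ℕ → Finset ℕ := fun n =>
        if hn : N ≤ n then ((hF (n - N)).1.image (r (n - N))).toFinset else ∅
      have hGf_mem : ∀ n m, m ∈ Gf n → N ≤ n ∧ U n m ∈ F (n - N) := by
        intro n m hm
        by_cases hn : N ≤ n
        · refine ⟨hn, ?_⟩
          simp only [Gf, dif_pos hn, Set.Finite.mem_toFinset, Set.mem_image] at hm
          obtain ⟨W, hW, rfl⟩ := hm
          have hrw := hr (n - N) W hW
          rw [Nat.add_sub_cancel' hn] at hrw
          rw [hrw]
          exact hW
        · simp only [Gf, dif_neg hn] at hm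
          exact absurd hm (Finset.notMem_empty m)
      have hGf_rep : ∀ k W, W ∈ F k → ∃ m ∈ Gf (N + k), U (N + k) m = W := by
        intro k W hW
        refine ⟨r k W, ?_, hr k W hW⟩
        have hn : N ≤ N + k := Nat.le_add_right N k
        simp only [Gf, dif_pos hn, Nat.add_sub_cancel_left, Set.Finite.mem_toFinset]
        exact Set.mem_image_of_mem _ hW
      let G : ℕ → Finset ℕ := fun n =>
        (Gf n).filter (fun m => ∀ n' < n, ∀ m' ∈ Gf n', U n' m' ≠ U n m)
      obtain ⟨⟨⟨hVcnt, hVcov, hVnu⟩, hVinf, hVpair⟩, hVclop⟩ := hτ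
      have hkey : ∀ W ∈ ⋃ k, F k, ∃ n, ∃ m ∈ G n, U n m = W := by
        intro W hW
        obtain ⟨k, hk⟩ := Set.mem_iUnion.1 hW
        have hex : ∃ n, ∃ m ∈ Gf n, U n m = W := ⟨N + k, hGf_rep k W hk⟩
        obtain ⟨m₀, hm₀, hUm₀⟩ := Nat.find_spec hex
        refine ⟨Nat.find hex, m₀, ?_, hUm₀⟩
        simp only [G, Finset.mem_filter]
        refine ⟨hm₀, fun n' hn' m' hm' heq => ?_⟩
        exact Nat.find_min hex hn' ⟨m', hm', heq.trans hUm₀⟩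
      have hGmemV : ∀ n m, m ∈ G n → U n m ∈ ⋃ k, F k := by
        intro n m hm
        have hm' : m ∈ Gf n := (Finset.mem_filter.1 hm).1
        exact Set.mem_iUnion.2 ⟨n - N, (hGf_mem n m hm').2⟩
      have main : ∀ x y : ↥X, {W | W ∈ ⋃ k, F k ∧ x ∈ W ∧ y ∉ W}.Finite →
          ∀ᶠ n in atTop, ∀ m ∈ G n, Ψ x (n, m) ≤ Ψ y (n, m) := by
        intro x y hSfin
        have hBadfin : {n | ∃ m ∈ G n, x ∈ U n m ∧ y ∉ U n m}.Finite := by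
          set Bad := {n | ∃ m ∈ G n, x ∈ U n m ∧ y ∉ U n m} with hBadDef
          let g : ℕ → ℕ := fun n =>
            if h : ∃ m, m ∈ G n ∧ x ∈ U n m ∧ y ∉ U n m then h.choose else 0
          have hg : ∀ n ∈ Bad, g n ∈ G n ∧ x ∈ U n (g n) ∧ y ∉ U n (g n) := by
            intro n hn
            obtain ⟨m, hm1, hm2⟩ := hn
            have h : ∃ m, m ∈ G n ∧ x ∈ U n m ∧ y ∉ U n m := ⟨m, hm1, hm2⟩
            simp only [g, dif_pos h]
            exact h.choose_spec
          have himg : (fun n => U n (g n)) '' Bad ⊆ {W | W ∈ ⋃ k, F k ∧ x ∈ W ∧ y ∉ W} := by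
            rintro W ⟨n, hn, rfl⟩
            obtain ⟨h1, h2, h3⟩ := hg n hn
            exact ⟨hGmemV n (g n) h1, h2, h3⟩
          have hinj : Set.InjOn (fun n => U n (g n)) Bad := by
            intro a ha b hb hab
            by_contra hne
            rcases lt_or_gt_of_ne hne with h | h
            · have hfb := (Finset.mem_filter.1 (hg b hb).1).2
              have hfa : g a ∈ Gf a := (Finset.mem_filter.1 (hg a ha).1).1
              exact hfb a h (g a) hfa hab
            · have hfa := (Finset.mem_filter.1 (hg a ha).1).2
              have hfb : g b ∈ Gf b := (Finset.mem_filter.1 (hg b hb).1).1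
              exact hfa b h (g b) hfb hab.symm
          exact Set.Finite.of_finite_image (hSfin.subset himg) hinj
        refine (ev_not_mem' hBadfin).mono ?_
        intro n hn m hm
        cases hx : Ψ x (n, m)
        · exact Bool.false_le _
        · have hxU : x ∈ U n m := hx
          have hyU : y ∈ U n m := by
            by_contra hy
            exact hn ⟨m, hm, hxU, hy⟩
          have hy' : Ψ y (n, m) = true := hyU
          rw [hy']
      refine ⟨G, ?_, ?_⟩
      · rintro A ⟨x, rfl⟩
        rw [Nat.frequently_atTop_iff_infinite]
        by_contra hT
        rw [Set.not_infinite] at hT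
        have hsub2 : {W | W ∈ ⋃ k, F k ∧ x ∈ W} ⊆
            ⋃ n ∈ {n | ∃ m ∈ G n, Ψ x (n, m) = true}, (U n) '' (G n : Set ℕ) := by
          rintro W ⟨hW, hxW⟩
          obtain ⟨n, m, hm, rfl⟩ := hkey W hW
          have hn : n ∈ {n | ∃ m ∈ G n, Ψ x (n, m) = true} := ⟨m, hm, hxW⟩
          exact Set.mem_biUnion hn ⟨m, Finset.mem_coe.2 hm, rfl⟩
        exact hVinf x ((hT.biUnion fun n _ => (G n).finite_toSet.image _).subset hsub2)
      · rintro A ⟨x, rfl⟩ B ⟨y, rfl⟩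
        rcases hVpair x y with h | h
        · exact Or.inl (main x y h)
        · exact Or.inr (main y x h)
  · -- the image property implies Sfin(C_Γ, C_Τ)
    intro h2 𝒰 h𝒰
    set 𝒲 : Set (Set ↥X) := {V | {n | V ∈ 𝒰 n}.Infinite} with h𝒲def
    by_cases hc : ∃ n₀, (𝒲 ∩ 𝒰 n₀).Infinite
    · -- a single cover contains infinitely many recurring sets
      obtain ⟨n₀, hn₀⟩ := hc
      obtain ⟨e, he_inj, he_rng⟩ :=
        exists_enum' ((h𝒰 n₀).1.1.1.mono Set.inter_subset_right) hn₀
      have hek : ∀ k, {n | e k ∈ 𝒰 n}.Infinite := by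
        intro k
        have hm : e k ∈ 𝒲 ∩ 𝒰 n₀ := he_rng ▸ Set.mem_range_self k
        exact hm.1
      have hex : ∀ k, ∃ n, k ≤ n ∧ e k ∈ 𝒰 n := by
        intro k
        obtain ⟨n, hn, hkn⟩ := (hek k).exists_gt k
        exact ⟨n, le_of_lt hkn, hn⟩
      let m : ℕ → ℕ := fun k => Nat.find (hex k)
      have hm1 : ∀ k, k ≤ m k := fun k => (Nat.find_spec (hex k)).1
      have hm2 : ∀ k, e k ∈ 𝒰 (m k) := fun k => (Nat.find_spec (hex k)).2
      refine ⟨fun n => e '' {k | m k = n}, ?_, ?_⟩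
      · intro n
        constructor
        · apply Set.Finite.image
          apply (Set.finite_Iic n).subset
          intro k hk
          exact Set.mem_Iic.2 ((hm1 k).trans (Set.mem_setOf_eq ▸ hk).le)
        · rintro W ⟨k, hk, rfl⟩
          have hkn : m k = n := hk
          exact hkn ▸ hm2 k
      · have hU : (⋃ n, e '' {k | m k = n}) = 𝒲 ∩ 𝒰 n₀ := by
          rw [← he_rng]
          ext W
          simp only [Set.mem_iUnion, Set.mem_image, Set.mem_range, Set.mem_setOf_eq]
          constructor
          · rintro ⟨n, k, hk, rfl⟩
            exact ⟨k, rfl⟩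
          · rintro ⟨k, rfl⟩
            exact ⟨m k, k, rfl, rfl⟩
        rw [hU]
        exact kTau_of_subset' (h𝒰 n₀) Set.inter_subset_right hn₀
    · -- every cover has only finitely many recurring sets
      push_neg at hc
      have hfin : ∀ n, (𝒲 ∩ 𝒰 n).Finite := fun n => hc n
      have hinf' : ∀ n, (𝒰 n \ 𝒲).Infinite := by
        intro n
        have h1 : 𝒰 n \ (𝒲 ∩ 𝒰 n) = 𝒰 n \ 𝒲 := by
          ext W
          simp only [Set.mem_diff, Set.mem_inter_iff]
          tauto
        exact h1 ▸ ((h𝒰 n).1.2.1.diff (hfin n))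
      obtain ⟨e, he⟩ : ∃ e : ℕ → ℕ → Set ↥X,
          ∀ n, Function.Injective (e n) ∧ Set.range (e n) = 𝒰 n \ 𝒲 := by
        choose e h1e h2e using fun n =>
          exists_enum' (((h𝒰 n).1.1.1).mono Set.diff_subset) (hinf' n)
        exact ⟨e, fun n => ⟨h1e n, h2e n⟩⟩
      have hemem : ∀ n m, e n m ∈ 𝒰 n \ 𝒲 := fun n m => (he n).2 ▸ Set.mem_range_self m
      set Ψ : ↥X → Arr := fun x p => (e p.1 p.2).boolIndicator x with hΨdef
      have hΨc : Continuous Ψ := by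
        apply continuous_pi
        intro p
        exact (continuous_boolIndicator_iff_isClopen _).2 ((h𝒰 p.1).2 _ (hemem p.1 p.2).1)
      have hmiss : ∀ (x : ↥X) n, {m | x ∉ e n m}.Finite := by
        intro x n
        have h1 : {m | x ∉ e n m} ⊆ (e n) ⁻¹' {W | W ∈ 𝒰 n ∧ x ∉ W} := by
          intro m hm
          exact ⟨(hemem n m).1, hm⟩
        exact (((h𝒰 n).1.2.2 x).preimage ((he n).1.injOn)).subset h1
      have hΨγ : GammaFamily (Set.range Ψ) := by
        rintro A ⟨x, rfl⟩ n
        refine (ev_not_mem' (hmiss x n)).mono ?_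
        intro m hm
        simp only [Set.mem_setOf_eq, not_not] at hm
        exact (Set.mem_iff_boolIndicator _ _).1 hm
      obtain ⟨G, hGa, hGb⟩ := h2 Ψ hΨc hΨγ
      have hGa' : ∀ x : ↥X, {n | ∃ m ∈ G n, x ∈ e n m}.Infinite := by
        intro x
        rw [← Nat.frequently_atTop_iff_infinite]
        refine (hGa (Ψ x) ⟨x, rfl⟩).mono ?_
        rintro n ⟨mm, hmm, hΨt⟩
        exact ⟨mm, hmm, (Set.mem_iff_boolIndicator _ _).2 hΨt⟩
      refine ⟨fun n => (e n) '' (G n : Set ℕ), ?_, ?_⟩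
      · intro n
        refine ⟨(G n).finite_toSet.image _, ?_⟩
        rintro W ⟨mm, _, rfl⟩
        exact (hemem n mm).1
      · have hVdest : ∀ W ∈ ⋃ n, (e n) '' (G n : Set ℕ),
            ∃ n, ∃ mm ∈ G n, e n mm = W := by
          intro W hW
          obtain ⟨n, hn⟩ := Set.mem_iUnion.1 hW
          obtain ⟨mm, hmm, rfl⟩ := hn
          exact ⟨n, mm, Finset.mem_coe.1 hmm, rfl⟩
        have main2 : ∀ x y : ↥X,
            (∀ᶠ n in atTop, ∀ mm ∈ G n, Ψ x (n, mm) ≤ Ψ y (n, mm)) →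
            {W | W ∈ ⋃ n, (e n) '' (G n : Set ℕ) ∧ x ∈ W ∧ y ∉ W}.Finite := by
          intro x y hev
          obtain ⟨n₀, hn₀⟩ := eventually_atTop.1 hev
          apply ((Set.finite_Iio n₀).biUnion
            (fun n _ => (G n).finite_toSet.image (e n))).subset
          rintro W ⟨hW, hxW, hyW⟩
          obtain ⟨n, mm, hmm, rfl⟩ := hVdest W hW
          refine Set.mem_biUnion (show n ∈ Set.Iio n₀ from ?_)
            ⟨mm, Finset.mem_coe.2 hmm, rfl⟩
          by_contra hn
          have hn' : n₀ ≤ n := not_lt.1 hn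
          have hle := hn₀ n hn' mm hmm
          have hxt : Ψ x (n, mm) = true := (Set.mem_iff_boolIndicator _ _).1 hxW
          rw [hxt] at hle
          have hyt : Ψ y (n, mm) = true := le_antisymm (Bool.le_true _) hle
          exact hyW ((Set.mem_iff_boolIndicator _ _).2 hyt)
        refine ⟨⟨⟨?_, ?_, ?_⟩, ?_, ?_⟩, ?_⟩
        · exact Set.countable_iUnion fun n => ((G n).finite_toSet.image _).countable
        · ext x
          simp only [Set.mem_sUnion, Set.mem_univ, iff_true]
          obtain ⟨n, mm, hmm, hΨt⟩ := (hGa (Ψ x) ⟨x, rfl⟩).exists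
          exact ⟨e n mm, Set.mem_iUnion.2 ⟨n, Set.mem_image_of_mem _ (Finset.mem_coe.2 hmm)⟩,
            (Set.mem_iff_boolIndicator _ _).2 hΨt⟩
        · intro hu
          obtain ⟨n, mm, hmm, heq⟩ := hVdest _ hu
          exact (h𝒰 n).1.1.2.2 (heq ▸ (hemem n mm).1)
        · intro x
          intro hfin2
          have hWfin : ∀ W ∈ {W | W ∈ ⋃ n, (e n) '' (G n : Set ℕ) ∧ x ∈ W},
              {n | W ∈ 𝒰 n}.Finite := by
            rintro W ⟨hW, _⟩
            obtain ⟨n, mm, hmm, rfl⟩ := hVdest W hW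
            have : e n mm ∉ 𝒲 := (hemem n mm).2
            exact Set.not_infinite.mp this
          have hTfin : (⋃ W ∈ {W | W ∈ ⋃ n, (e n) '' (G n : Set ℕ) ∧ x ∈ W},
              {n | W ∈ 𝒰 n}).Finite := hfin2.biUnion hWfin
          obtain ⟨n, hn1, hn2⟩ := ((hGa' x).diff hTfin).nonempty
          obtain ⟨mm, hmm, hxe⟩ := hn1
          have hWV : e n mm ∈ {W | W ∈ ⋃ n, (e n) '' (G n : Set ℕ) ∧ x ∈ W} :=
            ⟨Set.mem_iUnion.2 ⟨n, Set.mem_image_of_mem _ (Finset.mem_coe.2 hmm)⟩, hxe⟩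
          exact hn2 (Set.mem_biUnion hWV (hemem n mm).1)
        · intro x y
          rcases hGb (Ψ x) ⟨x, rfl⟩ (Ψ y) ⟨y, rfl⟩ with h | h
          · exact Or.inl (main2 x y h)
          · exact Or.inr (main2 y x h)
        · intro W hW
          obtain ⟨n, mm, hmm, rfl⟩ := hVdest W hW
          exact (h𝒰 n).2 _ (hemem n mm).1

end
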